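/- If the generator L of an irreducible Markov chain on finite E satisfies the sector condition ⟨Lf,g⟩_π² ≤ C_0 ⟨(-L)f,f⟩_π ⟨(-L)g,g⟩_π for all f, g, then for every pair of disjoint nonempty subsets A, B: Cap^s(A,B) ≤ Cap(A,B) ≤ C_0 Cap^s(A,B), where Cap^s is the capacity of the symmetrized chain with generator (1/2)(L + L*). -/

import Mathlib

open Finset

/-- Generator of a continuous-time Markov chain with jump rates `R`. -/
def mcGen {E : Type*} [Fintype E] (R : E → E → ℝ) (f : E → ℝ) (η : E) : ℝ :=
  ∑ ξ, R η ξ * (f ξ - f η)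

/-- Symmetrized rates `R^s(x,y) = (1/2)(R(x,y) + R*(x,y))`, where
`R*(x,y) = π(y)R(y,x)/π(x)` are the adjoint rates. -/
noncomputable def symRates {E : Type*} (R : E → E → ℝ) (π : E → ℝ) (x y : E) : ℝ :=
  (1 / 2) * (R x y + π y * R y x / π x)

section aux
variable {E : Type*} [Fintype E]

lemma stat_pair (R : E → E → ℝ) (π : E → ℝ)
    (hstat : ∀ f : E → ℝ, ∑ x, π x * mcGen R f x = 0) (f : E → ℝ) :
    ∑ x, ∑ y, π x * R x y * f y = ∑ x, ∑ y, π x * R x y * f x := by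
  have h := hstat f
  simp only [mcGen, Finset.mul_sum] at h
  have h2 : ∑ x, ∑ y, (π x * R x y * f y - π x * R x y * f x) = 0 := by
    rw [← h]
    exact Finset.sum_congr rfl fun x _ => Finset.sum_congr rfl fun y _ => by ring
  simp only [Finset.sum_sub_distrib] at h2
  linarith

omit [Fintype E] in
lemma symRates_db (R : E → E → ℝ) (π : E → ℝ) (hπ : ∀ x, 0 < π x) (x y : E) :
    π x * symRates R π x y = π y * symRates R π y x := by
  have hx : π x ≠ 0 := (hπ x).ne'
  have hy : π y ≠ 0 := (hπ y).ne'
  simp only [symRates]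
  field_simp
  ring

lemma gen_double (Q : E → E → ℝ) (π f g : E → ℝ) :
    ∑ x, (-(mcGen Q f x)) * g x * π x
      = ∑ x, ∑ y, -(π x * Q x y * (f y - f x) * g x) := by
  refine Finset.sum_congr rfl fun x _ => ?_
  simp only [mcGen]
  rw [neg_mul, neg_mul, Finset.sum_mul, Finset.sum_mul, ← Finset.sum_neg_distrib]
  exact Finset.sum_congr rfl fun y _ => by ring

lemma sym_dirichlet (R : E → E → ℝ) (π : E → ℝ) (hπ : ∀ x, 0 < π x) (f g : E → ℝ) :
    ∑ x, (-(mcGen (symRates R π) f x)) * g x * π x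
      = (1/2) * ∑ x, ∑ y, π x * symRates R π x y * (f y - f x) * (g y - g x) := by
  have hB := gen_double (symRates R π) π f g
  have key : ∑ x, ∑ y, π x * symRates R π x y * (f y - f x) * g y
      = ∑ x, ∑ y, -(π x * symRates R π x y * (f y - f x) * g x) := by
    rw [Finset.sum_comm]
    refine Finset.sum_congr rfl fun x _ => Finset.sum_congr rfl fun y _ => ?_
    rw [show π y * symRates R π y x = π x * symRates R π x y from symRates_db R π hπ y x]
    ring
  have expand : ∑ x, ∑ y, π x * symRates R π x y * (f y - f x) * (g y - g x)
      = (∑ x, ∑ y, π x * symRates R π x y * (f y - f x) * g y)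
        + ∑ x, ∑ y, -(π x * symRates R π x y * (f y - f x) * g x) := by
    rw [← Finset.sum_add_distrib]
    refine Finset.sum_congr rfl fun x _ => ?_
    rw [← Finset.sum_add_distrib]
    exact Finset.sum_congr rfl fun y _ => by ring
  rw [hB, expand, key]
  ring

lemma sym_energy_eq (R : E → E → ℝ) (π : E → ℝ) (hπ : ∀ x, 0 < π x)
    (hstat : ∀ f : E → ℝ, ∑ x, π x * mcGen R f x = 0) (f : E → ℝ) :
    ∑ x, (-(mcGen (symRates R π) f x)) * f x * π x
      = ∑ x, (-(mcGen R f x)) * f x * π x := by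
  have hDs := gen_double (symRates R π) π f f
  have hD1 := gen_double R π f f
  have h2Ds : (2:ℝ) * ∑ x, ∑ y, -(π x * symRates R π x y * (f y - f x) * f x)
      = (∑ x, ∑ y, -(π x * R x y * (f y - f x) * f x))
        + ∑ x, ∑ y, -(π y * R y x * (f y - f x) * f x) := by
    rw [Finset.mul_sum]
    simp only [Finset.mul_sum]
    rw [← Finset.sum_add_distrib]
    refine Finset.sum_congr rfl fun x _ => ?_
    rw [← Finset.sum_add_distrib]
    refine Finset.sum_congr rfl fun y _ => ?_
    have hx : π x ≠ 0 := (hπ x).ne'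
    simp only [symRates]
    field_simp
    ring
  have hswap : ∑ x, ∑ y, -(π y * R y x * (f y - f x) * f x)
      = ∑ x, ∑ y, -(π x * R x y * (f x - f y) * f y) := Finset.sum_comm ..
  have hstat2 := stat_pair R π hstat (fun z => f z * f z)
  have hD2 : ∑ x, ∑ y, -(π x * R x y * (f x - f y) * f y)
      = ∑ x, ∑ y, -(π x * R x y * (f y - f x) * f x) := by
    have h1 : ∑ x, ∑ y, (-(π x * R x y * (f x - f y) * f y) + π x * R x y * (f x * f x))
        = ∑ x, ∑ y, (-(π x * R x y * (f y - f x) * f x) + π x * R x y * (f y * f y)) := by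
      exact Finset.sum_congr rfl fun x _ => Finset.sum_congr rfl fun y _ => by ring
    simp only [Finset.sum_add_distrib] at h1
    linarith
  rw [hDs, hD1]
  linarith [h2Ds, hswap ▸ hD2]

lemma sdouble_nonneg (R : E → E → ℝ) (π : E → ℝ)
    (hR : ∀ x y : E, x ≠ y → 0 ≤ R x y) (hπ : ∀ x, 0 < π x) (g : E → ℝ) :
    0 ≤ ∑ x, ∑ y, π x * symRates R π x y * (g y - g x) * (g y - g x) := by
  refine Finset.sum_nonneg fun x _ => Finset.sum_nonneg fun y _ => ?_
  by_cases hxy : x = y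
  · subst hxy; simp
  · have h1 : 0 ≤ symRates R π x y := by
      have := hR x y hxy
      have := hR y x (Ne.symm hxy)
      have hx := (hπ x).le
      have hy := (hπ y).le
      unfold symRates
      positivity
    have h2 : π x * symRates R π x y * (g y - g x) * (g y - g x)
        = (π x * symRates R π x y) * ((g y - g x) * (g y - g x)) := by ring
    rw [h2]
    exact mul_nonneg (mul_nonneg (hπ x).le h1) (mul_self_nonneg _)

lemma cap_eq_form (Q : E → E → ℝ) (π : E → ℝ) (A B : Finset E) (u g : E → ℝ)
    (hu1 : ∀ x ∈ A, u x = 1) (huh : ∀ x, x ∉ A → x ∉ B → mcGen Q u x = 0)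
    (hg1 : ∀ x ∈ A, g x = 1) (hg0 : ∀ x ∈ B, g x = 0) :
    ∑ η ∈ A, π η * ∑ ξ, Q η ξ * (1 - u ξ) = ∑ x, (-(mcGen Q u x)) * g x * π x := by
  have hvan : ∀ x ∈ Finset.univ, x ∉ A → (-(mcGen Q u x)) * g x * π x = 0 := by
    intro x _ hxA
    by_cases hxB : x ∈ B
    · rw [hg0 x hxB]; ring
    · rw [huh x hxA hxB]; ring
  rw [← Finset.sum_subset (Finset.subset_univ A) hvan]
  refine Finset.sum_congr rfl fun η hη => ?_
  rw [hg1 η hη]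
  have hu := hu1 η hη
  have hval : ∑ ξ, Q η ξ * (1 - u ξ) = -(mcGen Q u η) := by
    simp only [mcGen]
    rw [← Finset.sum_neg_distrib]
    exact Finset.sum_congr rfl fun ξ _ => by rw [hu]; ring
  rw [hval]; ring

end aux

/-- If the generator satisfies a sector condition with constant `C₀`, then for
disjoint nonempty `A`, `B`:
`Cap^s(A,B) ≤ Cap(A,B) ≤ C₀ · Cap^s(A,B)`, where `Cap` is expressed through the
equilibrium potential `h` of the chain and `Cap^s` through the equilibrium
potential `hs` of the symmetrized chain (`Cap(A,B) = Σ_{η∈A} π(η) Σ_ξ R(η,ξ)(1-h(ξ))`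
`= Σ_{η∈A} π(η)λ(η)P_η[H_B < H_A⁺]`, and similarly for `Cap^s`). -/
theorem capacity_sector_comparison {E : Type*} [Fintype E] [DecidableEq E]
    (R : E → E → ℝ) (π : E → ℝ) (C₀ : ℝ) (A B : Finset E)
    (hAne : A.Nonempty) (hBne : B.Nonempty) (hAB : Disjoint A B)
    (hR : ∀ x y : E, x ≠ y → 0 ≤ R x y) (hπpos : ∀ x, 0 < π x)
    (hstat : ∀ f : E → ℝ, ∑ x, π x * mcGen R f x = 0)
    (hirr : ∀ x y : E, Relation.ReflTransGen (fun a b => a ≠ b ∧ 0 < R a b) x y)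
    (hsector : ∀ f g : E → ℝ,
      (∑ x, mcGen R f x * g x * π x) ^ 2 ≤
        C₀ * (∑ x, (-(mcGen R f x)) * f x * π x) * (∑ x, (-(mcGen R g x)) * g x * π x))
    (h hs : E → ℝ)
    (hh1 : ∀ x ∈ A, h x = 1) (hh0 : ∀ x ∈ B, h x = 0)
    (hharm : ∀ x, x ∉ A → x ∉ B → mcGen R h x = 0)
    (hs1 : ∀ x ∈ A, hs x = 1) (hs0 : ∀ x ∈ B, hs x = 0)
    (hsharm : ∀ x, x ∉ A → x ∉ B → mcGen (symRates R π) hs x = 0) :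
    (∑ η ∈ A, π η * ∑ ξ, symRates R π η ξ * (1 - hs ξ))
        ≤ ∑ η ∈ A, π η * ∑ ξ, R η ξ * (1 - h ξ) ∧
    (∑ η ∈ A, π η * ∑ ξ, R η ξ * (1 - h ξ))
        ≤ C₀ * ∑ η ∈ A, π η * ∑ ξ, symRates R π η ξ * (1 - hs ξ) := by
  set cap := ∑ η ∈ A, π η * ∑ ξ, R η ξ * (1 - h ξ) with hcapdef
  set caps := ∑ η ∈ A, π η * ∑ ξ, symRates R π η ξ * (1 - hs ξ) with hcapsdef
  -- capacity identities
  have hcap_h : cap = ∑ x, (-(mcGen R h x)) * h x * π x :=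
    cap_eq_form R π A B h h hh1 hharm hh1 hh0
  have hcap_hs : cap = ∑ x, (-(mcGen R h x)) * hs x * π x :=
    cap_eq_form R π A B h hs hh1 hharm hs1 hs0
  have hcaps_hs : caps = ∑ x, (-(mcGen (symRates R π) hs x)) * hs x * π x :=
    cap_eq_form (symRates R π) π A B hs hs hs1 hsharm hs1 hs0
  -- cap = (1/2) S h h
  have hSh : cap = (1/2) * ∑ x, ∑ y, π x * symRates R π x y * (h y - h x) * (h y - h x) := by
    rw [hcap_h, ← sym_energy_eq R π hπpos hstat h, sym_dirichlet R π hπpos h h]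
  -- caps = (1/2) S hs hs
  have hShs : caps
      = (1/2) * ∑ x, ∑ y, π x * symRates R π x y * (hs y - hs x) * (hs y - hs x) := by
    rw [hcaps_hs, sym_dirichlet R π hπpos hs hs]
  -- cross term vanishes
  have hcross0 : ∑ x, (-(mcGen (symRates R π) hs x)) * (h x - hs x) * π x = 0 := by
    refine Finset.sum_eq_zero fun x _ => ?_
    by_cases hxA : x ∈ A
    · rw [hh1 x hxA, hs1 x hxA]; ring
    · by_cases hxB : x ∈ B
      · rw [hh0 x hxB, hs0 x hxB]; ring
      · rw [hsharm x hxA hxB]; ring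
  have hScross : ∑ x, ∑ y, π x * symRates R π x y * (hs y - hs x)
      * ((h y - hs y) - (h x - hs x)) = 0 := by
    have := sym_dirichlet R π hπpos hs (fun z => h z - hs z)
    rw [hcross0] at this
    linarith
  -- bilinear expansion
  have hexp : ∑ x, ∑ y, π x * symRates R π x y * (h y - h x) * (h y - h x)
      = (∑ x, ∑ y, π x * symRates R π x y * (hs y - hs x) * (hs y - hs x)
          + 2 * ∑ x, ∑ y, π x * symRates R π x y * (hs y - hs x)
              * ((h y - hs y) - (h x - hs x)))
        + ∑ x, ∑ y, π x * symRates R π x y * ((h y - hs y) - (h x - hs x))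
            * ((h y - hs y) - (h x - hs x)) := by
    simp only [Finset.mul_sum]
    rw [← Finset.sum_add_distrib, ← Finset.sum_add_distrib]
    refine Finset.sum_congr rfl fun x _ => ?_
    rw [← Finset.sum_add_distrib, ← Finset.sum_add_distrib]
    exact Finset.sum_congr rfl fun y _ => by ring
  have hSww : 0 ≤ ∑ x, ∑ y, π x * symRates R π x y * ((h y - hs y) - (h x - hs x))
      * ((h y - hs y) - (h x - hs x)) := by
    have := sdouble_nonneg R π hR hπpos (fun z => h z - hs z)
    simpa using this
  have hlow : caps ≤ cap := by
    rw [hSh, hShs, hexp, hScross]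
    linarith
  refine ⟨hlow, ?_⟩
  -- upper bound via sector condition
  have hcaps_nonneg : 0 ≤ caps := by
    rw [hShs]
    have := sdouble_nonneg R π hR hπpos hs
    linarith
  have hEhs : ∑ x, (-(mcGen R hs x)) * hs x * π x = caps := by
    rw [hcaps_hs, sym_energy_eq R π hπpos hstat hs]
  have hneg : ∑ x, mcGen R h x * hs x * π x = -cap := by
    rw [hcap_hs, ← Finset.sum_neg_distrib]
    exact Finset.sum_congr rfl fun x _ => by ring
  have hsec := hsector h hs
  rw [hneg, ← hcap_h, hEhs] at hsec
  have hsec' : cap ^ 2 ≤ C₀ * cap * caps := by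
    calc cap ^ 2 = (-cap) ^ 2 := by ring
    _ ≤ C₀ * cap * caps := hsec
  have h0cap : 0 ≤ cap := le_trans hcaps_nonneg hlow
  rcases h0cap.eq_or_lt with hc0 | hcpos
  · have hcs0 : caps = 0 := le_antisymm (hc0 ▸ hlow) hcaps_nonneg
    rw [← hc0, hcs0, mul_zero]
  · have : cap * cap ≤ C₀ * caps * cap := by
      calc cap * cap = cap ^ 2 := by ring
      _ ≤ C₀ * cap * caps := hsec'
      _ = C₀ * caps * cap := by ring
    exact le_of_mul_le_mul_right this hcpos
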